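/- For z a complex variable, the dilated Chebyshev polynomials satisfy: the generalized characteristic polynomials P^m_k of the matrix A^1_{m,m+1}(z,z̄) (case c = 1) are given by P^m_k(z, z̄) = U^m_k(z/3, z̄/3), where U^m_k are the Chebyshev polynomials of the second kind defined by the recursion U^{n+1}_k = 3z·U^n_k − U^n_{k+1} − U^{n−1}_{k−1} with initial data U^0_0 = 1, U^1_0 = 3z, U^1_1 = 3z̄. -/

import Mathlib

/-- The `m × (m+1)` banded Toeplitz matrix `A^c_{m,m+1}(z, z̄)`: main diagonal `z`,
superdiagonal `conj z`, second superdiagonal `conj c`, subdiagonal `c`. -/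
noncomputable def Amc (c z : ℂ) (m : ℕ) : Matrix (Fin m) (Fin (m + 1)) ℂ :=
  Matrix.of fun i j =>
    if (j : ℕ) = (i : ℕ) then z
    else if (j : ℕ) = (i : ℕ) + 1 then (starRingEnd ℂ) z
    else if (j : ℕ) = (i : ℕ) + 2 then (starRingEnd ℂ) c
    else if (i : ℕ) = (j : ℕ) + 1 then c
    else 0

/-- The generalized characteristic polynomial `P^m_k(z, z̄)`: the determinant of the
`m × m` matrix obtained from `A^c_{m,m+1}(z, z̄)` by deleting its `(m−k)`-th column
(columns indexed `0, …, m`), so that `P^m_k` is monic with leading term `z^{m−k} z̄^k`.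
By convention `P^m_k = 0` when `m < 0`, `k < 0` or `k > m`. -/
noncomputable def Pdet (c z : ℂ) (m k : ℤ) : ℂ :=
  if h : 0 ≤ m ∧ 0 ≤ k ∧ k ≤ m then
    ((Amc c z m.toNat).submatrix id
      (Fin.succAbove ⟨(m - k).toNat, by omega⟩)).det
  else 0


open MvPolynomial in
/-- The Chebyshev polynomials of the second kind on the deltoid, as bivariate
polynomials in `(z, z̄)` (variables `X 0 = z`, `X 1 = z̄`), defined by the recursion
`U^{n+1}_k = 3z·U^n_k − U^n_{k+1} − U^{n−1}_{k−1}` (for `0 ≤ k ≤ n`) with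
`U^0_0 = 1`, `U^1_0 = 3z`, `U^1_1 = 3z̄`, conventions `U^n_{−1} = 0`, `U^{n−1}_n = 0`
(all out-of-range values are `0`), and the top entry `U^{n+1}_{n+1}` given by the
conjugate-symmetric relation `U^{n+1}_{n+1} = 3z̄·U^n_n − U^n_{n−1}`. -/
noncomputable def chebU : ℕ → ℤ → MvPolynomial (Fin 2) ℂ
  | 0, k => if k = 0 then 1 else 0
  | 1, k => if k = 0 then C 3 * X 0 else if k = 1 then C 3 * X 1 else 0
  | (n + 2), k =>
      if k < 0 ∨ (n : ℤ) + 2 < k then 0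
      else if k = (n : ℤ) + 2 then
        C 3 * X 1 * chebU (n + 1) ((n : ℤ) + 1) - chebU (n + 1) (n : ℤ)
      else
        C 3 * X 0 * chebU (n + 1) k - chebU (n + 1) (k + 1) - chebU n (k - 1)

noncomputable def uu (z : ℂ) (m : ℕ) (k : ℤ) : ℂ :=
  MvPolynomial.eval (fun i : Fin 2 => if i = 0 then z / 3 else (starRingEnd ℂ) z / 3) (chebU m k)

lemma uu_out (z : ℂ) (m : ℕ) (k : ℤ) (h : k < 0 ∨ (m:ℤ) < k) : uu z m k = 0 := by
  match m with
  | 0 => unfold uu chebU; rw [if_neg (by omega)]; simp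
  | 1 =>
    unfold uu chebU
    rw [if_neg (by omega), if_neg (by push_cast at h; omega)]; simp
  | (n+2) =>
    unfold uu chebU
    rw [if_pos (by push_cast at h ⊢; omega)]; simp

lemma uu_00 (z : ℂ) : uu z 0 0 = 1 := by unfold uu chebU; simp

lemma uu_10 (z : ℂ) : uu z 1 0 = z := by unfold uu chebU; simp; ring

lemma uu_11 (z : ℂ) : uu z 1 1 = (starRingEnd ℂ) z := by unfold uu chebU; simp; ring

lemma uu_R1 (z : ℂ) (n : ℕ) (k : ℤ) (h0 : 0 ≤ k) (h1 : k ≤ (n:ℤ) + 1) :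
    uu z (n+2) k = z * uu z (n+1) k - uu z (n+1) (k+1) - uu z n (k-1) := by
  unfold uu
  conv_lhs => rw [chebU]
  rw [if_neg (by push_cast; omega), if_neg (by push_cast; omega)]
  simp only [map_sub, map_mul, MvPolynomial.eval_C, MvPolynomial.eval_X,
    Fin.isValue, reduceIte]
  ring

lemma uu_T (z : ℂ) (n : ℕ) : uu z (n+1) ((n:ℤ)+1)
    = (starRingEnd ℂ) z * uu z n (n:ℤ) - uu z n ((n:ℤ)-1) := by
  match n with
  | 0 =>
    norm_num
    rw [uu_11, uu_00, uu_out z 0 (-1) (by omega)]; ring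
  | (m+1) =>
    unfold uu
    conv_lhs => rw [chebU]
    rw [if_neg (by push_cast; omega), if_pos (by push_cast; ring)]
    simp only [map_sub, map_mul, MvPolynomial.eval_C, MvPolynomial.eval_X,
      Fin.isValue, reduceIte]
    push_cast
    ring

lemma uu_T' (z : ℂ) (n : ℕ) (k : ℤ) (hk : k = (n:ℤ)+1) :
    uu z (n+1) k = (starRingEnd ℂ) z * uu z n (k-1) - uu z n (k-2) := by
  subst hk
  have h := uu_T z n
  ring_nf at h ⊢
  linear_combination h

lemma uu_20 (z : ℂ) : uu z 2 0 = z^2 - (starRingEnd ℂ) z := by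
  have h := uu_R1 z 0 0 (by norm_num) (by norm_num)
  norm_num at h
  rw [uu_10, uu_11, uu_out z 0 (-1) (by omega)] at h
  linear_combination h

lemma uu_21 (z : ℂ) : uu z 2 1 = z * (starRingEnd ℂ) z - 1 := by
  have h := uu_R1 z 0 1 (by norm_num) (by norm_num)
  norm_num at h
  rw [uu_11, uu_00, uu_out z 1 2 (by omega)] at h
  linear_combination h

lemma uu_22 (z : ℂ) : uu z 2 2 = ((starRingEnd ℂ) z)^2 - z := by
  have h := uu_T' z 1 2 (by norm_num)
  norm_num at h
  rw [uu_11, uu_10] at h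
  linear_combination h

lemma uu_K (z : ℂ) : ∀ (n : ℕ) (k : ℤ), 1 ≤ k → k ≤ (n:ℤ) →
    z * uu z n k - uu z n (k+1) - (starRingEnd ℂ) z * uu z n (k-1) + uu z n (k-2) = 0 := by
  intro n
  induction n using Nat.strong_induction_on with
  | _ n ih =>
    match n with
    | 0 => intro k h1 h2; omega
    | 1 =>
      intro k h1 h2
      have hk : k = 1 := by omega
      subst hk
      norm_num
      rw [uu_11, uu_10, uu_out z 1 2 (by omega), uu_out z 1 (-1) (by omega)]
      ring
    | 2 =>
      intro k h1 h2
      have hk : k = 1 ∨ k = 2 := by omega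
      rcases hk with hk | hk <;> subst hk <;> norm_num <;>
        rw [uu_20, uu_21, uu_22] <;>
        [rw [uu_out z 2 (-1) (by omega)]; rw [uu_out z 2 3 (by omega)]] <;> ring
    | (N+3) =>
      intro k h1 h2
      by_cases hA : k = ((N:ℤ)+3)
      · -- case A : k = n
        have hT1 := uu_T' z (N+2) k (by push_cast; omega)
        have hT0 := uu_T' z (N+1) (k-1) (by push_cast; omega)
        have hR5 := uu_R1 z (N+1) (k-1) (by omega) (by push_cast; omega)
        have hR4 := uu_R1 z (N+1) (k-2) (by omega) (by push_cast; omega)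
        have hZ1 := uu_out z (N+3) (k+1) (by push_cast; omega)
        have hZ2 := uu_out z (N+2) k (by push_cast; omega)
        push_cast at *
        ring_nf at *
        linear_combination z * hT1 - (starRingEnd ℂ) z * hR5 + hR4 - hT0 +
          (starRingEnd ℂ) z * hZ2 - hZ1
      · by_cases hB : k = ((N:ℤ)+2)
        · -- case B : k = n-1
          have hR1 := uu_R1 z (N+1) k (by omega) (by push_cast; omega)
          have hT1 := uu_T' z (N+2) (k+1) (by push_cast; omega)
          have hR3 := uu_R1 z (N+1) (k-1) (by omega) (by push_cast; omega)
          have hR4 := uu_R1 z (N+1) (k-2) (by omega) (by push_cast; omega)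
          have hK1 := ih (N+2) (by omega) k (by omega) (by push_cast; omega)
          have hK2 := ih (N+1) (by omega) (k-1) (by omega) (by push_cast; omega)
          have hZ1 := uu_out z (N+1) k (by push_cast; omega)
          push_cast at *
          ring_nf at *
          linear_combination z * hR1 - hT1 - (starRingEnd ℂ) z * hR3 + hR4 +
            z * hK1 - hK2 - hZ1
        · by_cases hD : k = 1
          · -- case D : k = 1
            subst hD
            have hR1 := uu_R1 z (N+1) 1 (by omega) (by push_cast; omega)
            have hR2 := uu_R1 z (N+1) 2 (by omega) (by push_cast; omega)
            have hR0 := uu_R1 z (N+1) 0 (by omega) (by push_cast; omega)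
            have hK1 := ih (N+2) (by omega) 1 (by omega) (by push_cast; omega)
            have hK2 := ih (N+2) (by omega) 2 (by omega) (by push_cast; omega)
            have hR0' := uu_R1 z N 0 (by omega) (by push_cast; omega)
            have hZ1 := uu_out z (N+3) (-1) (by omega)
            have hZ2 := uu_out z (N+1) (-1) (by omega)
            have hZ3 := uu_out z (N+2) (-1) (by omega)
            have hZ4 := uu_out z N (-1) (by omega)
            push_cast at *
            ring_nf at *
            linear_combination z * hR1 - hR2 - (starRingEnd ℂ) z * hR0 +
              z * hK1 - hK2 + hR0' + hZ1 + (starRingEnd ℂ) z * hZ2 -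
              z * hZ3 - hZ4
          · -- case C : 2 ≤ k ≤ n-2
            have hR1 := uu_R1 z (N+1) k (by omega) (by push_cast; omega)
            have hR2 := uu_R1 z (N+1) (k+1) (by omega) (by push_cast; omega)
            have hR3 := uu_R1 z (N+1) (k-1) (by omega) (by push_cast; omega)
            have hR4 := uu_R1 z (N+1) (k-2) (by omega) (by push_cast; omega)
            have hK1 := ih (N+2) (by omega) k (by omega) (by push_cast; omega)
            have hK2 := ih (N+2) (by omega) (k+1) (by omega) (by push_cast; omega)
            have hK3 := ih (N+1) (by omega) (k-1) (by omega) (by push_cast; omega)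
            push_cast at *
            ring_nf at *
            linear_combination z * hR1 - hR2 - (starRingEnd ℂ) z * hR3 + hR4 +
              z * hK1 - hK2 - hK3

lemma uu_sym (z : ℂ) : ∀ (m : ℕ) (k : ℤ), uu z m k = uu ((starRingEnd ℂ) z) m ((m:ℤ) - k) := by
  intro m
  induction m using Nat.strong_induction_on with
  | _ m ih =>
    intro k
    by_cases hout : k < 0 ∨ (m:ℤ) < k
    · rw [uu_out z m k hout, uu_out _ m _ (by omega)]
    push_neg at hout
    match m with
    | 0 =>
      have hk : k = 0 := by omega
      subst hk
      norm_num [uu_00]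
    | 1 =>
      have hk : k = 0 ∨ k = 1 := by omega
      rcases hk with hk | hk <;> subst hk <;> norm_num [uu_10, uu_11, Complex.conj_conj]
    | (N+2) =>
      by_cases h0 : k = 0
      · subst h0
        have hL := uu_R1 z N 0 (by omega) (by omega)
        have hT := uu_T' ((starRingEnd ℂ) z) (N+1) (((N:ℕ)+2:ℕ):ℤ) (by push_cast; omega)
        have hS1 := ih (N+1) (by omega) 0
        have hS2 := ih (N+1) (by omega) 1
        have hZ := uu_out z N (-1) (by omega)
        simp only [Complex.conj_conj] at *
        push_cast at *
        ring_nf at *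
        linear_combination hL - hT + z * hS1 - hS2 - hZ
      · by_cases hm : k = ((N:ℤ)+2)
        · subst hm
          have hT := uu_T' z (N+1) ((N:ℤ)+2) (by push_cast; omega)
          have hR := uu_R1 ((starRingEnd ℂ) z) N 0 (by omega) (by omega)
          have hS1 := ih (N+1) (by omega) ((N:ℤ)+1)
          have hS2 := ih (N+1) (by omega) (N:ℤ)
          have hZ := uu_out ((starRingEnd ℂ) z) N (-1) (by omega)
          push_cast at *
          ring_nf at *
          linear_combination hT - hR + (starRingEnd ℂ) z * hS1 - hS2 + hZ
        · -- 1 ≤ k ≤ m-1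
          have hL := uu_R1 z N k (by omega) (by push_cast; omega)
          have hR := uu_R1 ((starRingEnd ℂ) z) N ((N:ℤ)+2 - k) (by push_cast; omega)
            (by push_cast; omega)
          have hK := uu_K z (N+1) k (by omega) (by push_cast; omega)
          have hS1 := ih (N+1) (by omega) (k-1)
          have hS2 := ih (N+1) (by omega) (k-2)
          have hS3 := ih N (by omega) (k-1)
          push_cast at *
          ring_nf at *
          linear_combination hL - hR + hK + (starRingEnd ℂ) z * hS1 - hS2 - hS3

lemma uu_rec1 (z : ℂ) (n : ℕ) (k : ℤ) (h0 : 0 ≤ k) (h : k ≤ (n:ℤ)) :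
    uu z (n+3) k = z * uu z (n+2) k - (starRingEnd ℂ) z * uu z (n+1) k + uu z n k := by
  have hR := uu_R1 z (n+1) k (by omega) (by push_cast; omega)
  have h1 := uu_sym z (n+2) (k+1)
  have h2 := uu_R1 ((starRingEnd ℂ) z) n ((n:ℤ)+2-(k+1)) (by omega) (by push_cast; omega)
  have h3 := uu_sym z (n+1) k
  have h4 := uu_sym z (n+1) (k-1)
  have h5 := uu_sym z n k
  push_cast at *
  ring_nf at *
  linear_combination hR - h1 - h2 + (starRingEnd ℂ) z * h3 - h4 - h5

noncomputable def ent (z : ℂ) (i j : ℤ) : ℂ :=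
  if j = i then z else if j = i + 1 then (starRingEnd ℂ) z
  else if j = i + 2 then 1 else if i = j + 1 then 1 else 0

noncomputable def Bm (z : ℂ) (m d : ℕ) : Matrix (Fin m) (Fin m) ℂ :=
  Matrix.of fun i j => ent z (i:ℤ) (if (j:ℕ) < d then (j:ℤ) else (j:ℤ)+1)

lemma ent_conj (z : ℂ) (a b x : ℤ) :
    ent ((starRingEnd ℂ) z) a b = ent z (x - a) (x + 1 - b) := by
  simp only [ent, Complex.conj_conj]
  split_ifs <;> first | rfl | omega

lemma ent_shift (z : ℂ) (a b c : ℤ) : ent z (a + c) (b + c) = ent z a b := by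
  simp only [ent]
  split_ifs <;> first | rfl | omega

lemma ent_out (z : ℂ) (a b : ℤ) (h : b < a - 1 ∨ a + 2 < b) : ent z a b = 0 := by
  simp only [ent]
  split_ifs <;> first | rfl | omega

lemma det_sym (z : ℂ) (m d : ℕ) (hd : d ≤ m) :
    (Bm z m d).det = (Bm ((starRingEnd ℂ) z) m (m - d)).det := by
  have key : Bm ((starRingEnd ℂ) z) m (m - d)
      = (Bm z m d).submatrix (Fin.revPerm : Equiv.Perm (Fin m)) Fin.revPerm := by
    ext i j
    have hi := i.isLt
    have hj := j.isLt
    simp only [Bm, Matrix.of_apply, Matrix.submatrix_apply, Equiv.coe_fn_mk,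
      Fin.revPerm_apply, Fin.val_rev]
    rw [ent_conj (x := (m:ℤ)-1)]
    congr 1
    · push_cast; omega
    · split_ifs <;> push_cast <;> omega
  rw [key, Matrix.det_submatrix_equiv_self]


lemma succAbove_val {m : ℕ} (p : Fin (m+1)) (j : Fin m) :
    ((p.succAbove j : Fin (m+1)) : ℕ) = if (j:ℕ) < (p:ℕ) then (j:ℕ) else (j:ℕ)+1 := by
  rw [Fin.succAbove]
  split_ifs with h1 h2 h3 <;>
    simp_all [Fin.lt_def, Fin.coe_castSucc, Fin.val_succ]

lemma det_rec (z : ℂ) (n d : ℕ) (h3 : 3 ≤ d) (hd : d ≤ n + 3) :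
    (Bm z (n+3) d).det = z * (Bm z (n+2) (d-1)).det
      - (starRingEnd ℂ) z * (Bm z (n+1) (d-2)).det + (Bm z n (d-3)).det := by
  have e0 : (Bm z (n+3) d).submatrix Fin.succ (Fin.succAbove 0) = Bm z (n+2) (d-1) := by
    ext i j
    simp only [Bm, Matrix.submatrix_apply, Matrix.of_apply, Fin.succAbove_zero, Fin.val_succ]
    push_cast
    rw [← ent_shift z (i:ℤ) (if (j:ℕ) < d-1 then (j:ℤ) else (j:ℤ)+1) 1]
    congr 1
    split_ifs <;> push_cast <;> omega
  have e1 : ((Bm z (n+3) d).submatrix Fin.succ (Fin.succ (0 : Fin (n+2))).succAbove).det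
      = (Bm z (n+1) (d-2)).det := by
    rw [Matrix.det_succ_column_zero, Fin.sum_univ_succ]
    have m00 : ((Bm z (n+3) d).submatrix Fin.succ (Fin.succ (0 : Fin (n+2))).succAbove) 0 0 = 1 := by
      simp only [Matrix.submatrix_apply, Bm, Matrix.of_apply, succAbove_val,
        Fin.val_succ, Fin.val_zero]
      norm_num
      rw [if_pos (by omega)]
      norm_num [ent]
    have mtail : ∀ i : Fin (n+1),
        ((Bm z (n+3) d).submatrix Fin.succ (Fin.succ (0 : Fin (n+2))).succAbove) i.succ 0 = 0 := by
      intro i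
      simp only [Matrix.submatrix_apply, Bm, Matrix.of_apply, succAbove_val,
        Fin.val_succ, Fin.val_zero]
      apply ent_out
      split_ifs <;> push_cast <;> omega
    have comp : (((Bm z (n+3) d).submatrix Fin.succ (Fin.succ (0 : Fin (n+2))).succAbove).submatrix
        (Fin.succAbove 0) Fin.succ) = Bm z (n+1) (d-2) := by
      ext i j
      simp only [Matrix.submatrix_apply, Fin.succAbove_zero, Bm, Matrix.of_apply,
        succAbove_val, Fin.val_succ]
      norm_num
      rw [← ent_shift z (i:ℤ) (if (j:ℕ) < d-2 then (j:ℤ) else (j:ℤ)+1) 2]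
      congr 1 <;>
        first
          | (split_ifs <;> push_cast <;> omega)
          | (push_cast; omega)
    rw [m00, comp, Finset.sum_eq_zero (fun i _ => by rw [mtail i]; ring)]
    simp

  have e2 : ((Bm z (n+3) d).submatrix Fin.succ
      ((Fin.succ (Fin.succ (0 : Fin (n+1))))).succAbove).det = (Bm z n (d-3)).det := by
    rw [Matrix.det_succ_column_zero, Fin.sum_univ_succ]
    have m00 : ((Bm z (n+3) d).submatrix Fin.succ (Fin.succ (Fin.succ (0 : Fin (n+1)))).succAbove) 0 0 = 1 := by
      simp only [Matrix.submatrix_apply, Bm, Matrix.of_apply, succAbove_val,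
        Fin.val_succ, Fin.val_zero]
      norm_num
      rw [if_pos (by omega)]
      norm_num [ent]
    have mtail : ∀ i : Fin (n+1),
        ((Bm z (n+3) d).submatrix Fin.succ (Fin.succ (Fin.succ (0 : Fin (n+1)))).succAbove) i.succ 0 = 0 := by
      intro i
      simp only [Matrix.submatrix_apply, Bm, Matrix.of_apply, succAbove_val,
        Fin.val_succ, Fin.val_zero]
      apply ent_out
      split_ifs <;> push_cast <;> omega
    rw [m00, Finset.sum_eq_zero (fun i _ => by rw [mtail i]; ring)]
    set Nmat := (((Bm z (n+3) d).submatrix Fin.succ (Fin.succ (Fin.succ (0 : Fin (n+1)))).succAbove).submatrix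
        (Fin.succAbove 0) Fin.succ) with hN
    rw [Matrix.det_succ_column_zero, Fin.sum_univ_succ]
    have n00 : Nmat 0 0 = 1 := by
      simp only [hN, Matrix.submatrix_apply, Fin.succAbove_zero, Bm, Matrix.of_apply,
        succAbove_val, Fin.val_succ, Fin.val_zero]
      norm_num
      rw [if_pos (by omega)]
      norm_num [ent]
    have ntail : ∀ i : Fin n, Nmat i.succ 0 = 0 := by
      intro i
      simp only [hN, Matrix.submatrix_apply, Fin.succAbove_zero, Bm, Matrix.of_apply,
        succAbove_val, Fin.val_succ, Fin.val_zero]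
      apply ent_out
      split_ifs <;> push_cast <;> omega
    have comp : Nmat.submatrix (Fin.succAbove 0) Fin.succ = Bm z n (d-3) := by
      ext i j
      simp only [hN, Matrix.submatrix_apply, Fin.succAbove_zero, Bm, Matrix.of_apply,
        succAbove_val, Fin.val_succ]
      norm_num
      rw [← ent_shift z (i:ℤ) (if (j:ℕ) < d-3 then (j:ℤ) else (j:ℤ)+1) 3]
      congr 1 <;>
        first
          | (split_ifs <;> push_cast <;> omega)
          | (push_cast; omega)
    rw [n00, comp, Finset.sum_eq_zero (fun i _ => by rw [ntail i]; ring)]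
    simp

  rw [Matrix.det_succ_row_zero, Fin.sum_univ_succ, Fin.sum_univ_succ, Fin.sum_univ_succ]
  rw [e0, e1, e2]
  have t0 : Bm z (n+3) d 0 0 = z := by
    simp only [Bm, Matrix.of_apply, Fin.val_zero]
    simp only [show (0:ℕ) < d from by omega, ite_true]
    norm_num [ent]
  have t1 : Bm z (n+3) d 0 (Fin.succ 0) = (starRingEnd ℂ) z := by
    simp only [Bm, Matrix.of_apply, Fin.val_zero, Fin.val_succ]
    norm_num
    rw [if_pos (by omega)]
    norm_num [ent]
  have t2 : Bm z (n+3) d 0 ((Fin.succ 0).succ) = 1 := by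
    simp only [Bm, Matrix.of_apply, Fin.val_zero, Fin.val_succ]
    norm_num
    rw [if_pos (by omega)]
    norm_num [ent]
  rw [t0, t1, t2, Finset.sum_eq_zero (fun i _ => by
    have : Bm z (n+3) d 0 (i.succ.succ.succ) = 0 := by
      simp only [Bm, Matrix.of_apply, Fin.val_zero, Fin.val_succ]
      apply ent_out
      split_ifs <;> push_cast <;> omega
    rw [this]; ring)]
  simp only [Fin.val_zero, Fin.val_succ, pow_zero, pow_succ, pow_zero]
  ring


lemma uu_31 (z : ℂ) : uu z 3 1 = z^2 * (starRingEnd ℂ) z - ((starRingEnd ℂ) z)^2 - z := by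
  have h := uu_R1 z 1 1 (by norm_num) (by norm_num)
  norm_num at h
  rw [uu_21, uu_22, uu_10] at h
  linear_combination h

lemma uu_32 (z : ℂ) : uu z 3 2 = z * ((starRingEnd ℂ) z)^2 - z^2 - (starRingEnd ℂ) z := by
  have h := uu_R1 z 1 2 (by norm_num) (by norm_num)
  norm_num at h
  rw [uu_22, uu_out z 2 3 (by omega), uu_11] at h
  linear_combination h

lemma uu_33 (z : ℂ) : uu z 3 3 = ((starRingEnd ℂ) z)^3 - 2 * z * (starRingEnd ℂ) z + 1 := by
  have h := uu_T' z 2 3 (by norm_num)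
  norm_num at h
  rw [uu_22, uu_21] at h
  linear_combination h

lemma uu_42 (z : ℂ) : uu z 4 2 = z^2 * ((starRingEnd ℂ) z)^2 - z^3 - ((starRingEnd ℂ) z)^3 := by
  have h := uu_R1 z 2 2 (by norm_num) (by norm_num)
  norm_num at h
  rw [uu_32, uu_33, uu_21] at h
  linear_combination h

lemma Pdet_eq (z : ℂ) (m k : ℕ) (h : k ≤ m) :
    Pdet 1 z (m:ℤ) (k:ℤ) = (Bm z m (m-k)).det := by
  rw [Pdet, dif_pos (by omega)]
  show ((Amc 1 z m).submatrix id (Fin.succAbove ⟨((m:ℤ)-(k:ℤ)).toNat, by omega⟩)).det = _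
  have hv : ((m:ℤ)-(k:ℤ)).toNat = m - k := by omega
  congr 1
  ext i j
  simp only [Amc, Matrix.submatrix_apply, Matrix.of_apply, id_eq, Bm, succAbove_val, hv]
  simp only [ent]
  split_ifs <;> first | rfl | (exfalso; omega) | norm_num | omega

lemma key_det (m : ℕ) : ∀ (z : ℂ) (k : ℕ), k ≤ m → (Bm z m (m - k)).det = uu z m (k:ℤ) := by
  induction m using Nat.strong_induction_on with
  | _ m ih =>
    intro z k hk
    have main3 : ∀ (z : ℂ) (k : ℕ), k + 3 ≤ m → (Bm z m (m-k)).det = uu z m (k:ℤ) := by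
      intro z k h
      obtain ⟨n, rfl⟩ : ∃ n, m = n + 3 := ⟨m - 3, by omega⟩
      rw [det_rec z n (n+3-k) (by omega) (by omega)]
      rw [show n+3-k-1 = n+2-k from by omega, show n+3-k-2 = n+1-k from by omega,
          show n+3-k-3 = n-k from by omega]
      rw [ih (n+2) (by omega) z k (by omega), ih (n+1) (by omega) z k (by omega),
          ih n (by omega) z k (by omega)]
      rw [uu_rec1 z n (k:ℤ) (by omega) (by omega)]
    by_cases h1 : k + 3 ≤ m
    · exact main3 z k h1
    · by_cases h2 : 3 ≤ k
      · rw [det_sym z m (m-k) (by omega), show m - (m-k) = k from by omega]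
        have hm3 := main3 ((starRingEnd ℂ) z) (m-k) (by omega)
        rw [show m - (m-k) = k from by omega] at hm3
        rw [hm3]
        have hs := uu_sym ((starRingEnd ℂ) z) m ((m-k:ℕ):ℤ)
        rw [Complex.conj_conj] at hs
        rw [hs]
        congr 1
        push_cast
        omega
      · push_neg at h1 h2
        interval_cases k
        · interval_cases m
          · rw [show (0:ℕ)-0 = 0 from rfl, show ((0:ℕ):ℤ) = 0 from rfl, uu_00,
              Matrix.det_fin_zero]
          · rw [show ((0:ℕ):ℤ) = 0 from rfl, uu_10, Matrix.det_fin_one]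
            norm_num [Bm, ent]
          · rw [show ((0:ℕ):ℤ) = 0 from rfl, uu_20, Matrix.det_fin_two]
            norm_num [Bm, ent]
            ring
        · interval_cases m
          · rw [show ((1:ℕ):ℤ) = 1 from rfl, uu_11, Matrix.det_fin_one]
            norm_num [Bm, ent]
          · rw [show ((1:ℕ):ℤ) = 1 from rfl, uu_21, Matrix.det_fin_two]
            norm_num [Bm, ent]
            try ring
          · rw [show ((1:ℕ):ℤ) = 1 from rfl, uu_31, Matrix.det_fin_three]
            norm_num [Bm, ent]
            try ring
        · interval_cases m
          · rw [show ((2:ℕ):ℤ) = 2 from rfl, uu_22, Matrix.det_fin_two]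
            norm_num [Bm, ent]
            ring
          · rw [show ((2:ℕ):ℤ) = 2 from rfl, uu_32, Matrix.det_fin_three]
            norm_num [Bm, ent]
            simp (config := {decide := true}) only [Fin.isValue, Fin.val_two, Fin.val_zero, Fin.val_one, ite_true, ite_false]
            ring
          · rw [show ((2:ℕ):ℤ) = 2 from rfl, uu_42]
            norm_num [Matrix.det_succ_row_zero, Fin.sum_univ_succ, Matrix.det_fin_three,
              Matrix.submatrix_apply, succAbove_val, Bm, ent]
            try ring

/-- For `c = 1`, the generalized characteristic polynomials of `A¹_{m,m+1}(z, z̄)` are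
the dilated Chebyshev polynomials of the second kind:
`P^m_k(z, z̄) = U^m_k(z/3, z̄/3)` for `0 ≤ k ≤ m`. -/
theorem stmt18 (z : ℂ) (m k : ℕ) (hk : k ≤ m) :
    Pdet 1 z (m : ℤ) (k : ℤ) =
      MvPolynomial.eval
        (fun i : Fin 2 => if i = 0 then z / 3 else (starRingEnd ℂ) z / 3)
        (chebU m (k : ℤ)) := by
  rw [Pdet_eq z m k hk, key_det m z k hk]
  rfl
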